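/- Let n, g ∈ ℕ with 2g ≤ n and let w ∈ {0,1}^n. Define f : {0,1}^n → ℤ/4ℤ by f(x) = 2·Σ_{j=1}^{g} x_{2j−1}·x_{2j} + 2·Σ_{i=1}^{n} w_i·x_i, computed in ℤ/4ℤ with the coordinates x_i ∈ {0,1} regarded as elements of ℤ/4ℤ. Then N_1(f) = N_3(f) = 0; if w_i = 1 for some index i with 2g < i ≤ n, then N_0(f) = N_2(f); and otherwise N_0(f) − N_2(f) = (−1)^k · 2^{n−g}, where k is the number of indices j ∈ {1,…,g} with w_{2j−1} = w_{2j} = 1. -/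

import Mathlib

def chiZ (t : ZMod 2) : ℤ := if t = 0 then 1 else -1

lemma chiZ_add (a b : ZMod 2) : chiZ (a + b) = chiZ a * chiZ b := by revert a b; decide

lemma chiZ_sum {α : Type*} (s : Finset α) (f : α → ZMod 2) :
    chiZ (∑ a ∈ s, f a) = ∏ a ∈ s, chiZ (f a) := by
  classical

  induction s using Finset.induction_on with
  | empty => simp [chiZ]
  | insert _ _ ha ih => rw [Finset.sum_insert ha, Finset.prod_insert ha, chiZ_add, ih]

lemma key4 : ∀ t : ZMod 4,
    2 * t = if (ZMod.castHom (by norm_num : (2:ℕ) ∣ 4) (ZMod 2)) t = 0 then 0 else 2 := by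
  decide

lemma pair_sum (u v : Fin 2) :
    (∑ c : Fin 2 × Fin 2, chiZ (((c.1 : ℕ) : ZMod 2) * ((c.2 : ℕ) : ZMod 2) +
      (((u : ℕ) : ZMod 2) * ((c.1 : ℕ) : ZMod 2) + ((v : ℕ) : ZMod 2) * ((c.2 : ℕ) : ZMod 2))))
    = if u = 1 ∧ v = 1 then -2 else 2 := by revert u v; decide

lemma single_sum (u : Fin 2) :
    (∑ a : Fin 2, chiZ (((u : ℕ) : ZMod 2) * ((a : ℕ) : ZMod 2))) = if u = 0 then 2 else 0 := by
  revert u; decide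

def Phi (n g : ℕ) (hg : 2 * g ≤ n)
    (y : (Fin g → Fin 2 × Fin 2) × (Fin (n - 2 * g) → Fin 2)) (i : Fin n) : Fin 2 :=
  if h : i.1 < 2 * g then
    (if i.1 % 2 = 0 then (y.1 ⟨i.1 / 2, by omega⟩).1 else (y.1 ⟨i.1 / 2, by omega⟩).2)
  else y.2 ⟨i.1 - 2 * g, by have := i.isLt; omega⟩

def Psi (n g : ℕ) (hg : 2 * g ≤ n) (x : Fin n → Fin 2) :
    (Fin g → Fin 2 × Fin 2) × (Fin (n - 2 * g) → Fin 2) :=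
  (fun j => (x ⟨2 * j.1, by have := j.isLt; omega⟩, x ⟨2 * j.1 + 1, by have := j.isLt; omega⟩),
   fun k => x ⟨2 * g + k.1, by have := k.isLt; omega⟩)

lemma Phi_left (n g : ℕ) (hg : 2 * g ≤ n) (y) (j : Fin g) (i : Fin n) (hi : i.1 = 2 * j.1) :
    Phi n g hg y i = (y.1 j).1 := by
  have hj := j.isLt
  unfold Phi
  rw [dif_pos (by omega), if_pos (by omega)]
  exact congrArg (fun t => (y.1 t).1) (Fin.ext (show i.1 / 2 = j.1 by omega))

lemma Phi_right (n g : ℕ) (hg : 2 * g ≤ n) (y) (j : Fin g) (i : Fin n) (hi : i.1 = 2 * j.1 + 1) :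
    Phi n g hg y i = (y.1 j).2 := by
  have hj := j.isLt
  unfold Phi
  rw [dif_pos (by omega), if_neg (by omega)]
  exact congrArg (fun t => (y.1 t).2) (Fin.ext (show i.1 / 2 = j.1 by omega))

lemma Phi_tail (n g : ℕ) (hg : 2 * g ≤ n) (y) (k : Fin (n - 2 * g)) (i : Fin n)
    (hi : i.1 = 2 * g + k.1) :
    Phi n g hg y i = y.2 k := by
  have hk := k.isLt
  unfold Phi
  rw [dif_neg (by omega)]
  exact congrArg y.2 (Fin.ext (show i.1 - 2 * g = k.1 by omega))

lemma Phi_Psi (n g : ℕ) (hg : 2 * g ≤ n) (x : Fin n → Fin 2) :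
    Phi n g hg (Psi n g hg x) = x := by
  funext i
  have hin := i.isLt
  by_cases h : i.1 < 2 * g
  · rcases Nat.mod_two_eq_zero_or_one i.1 with he | he
    · rw [Phi_left n g hg _ ⟨i.1 / 2, by omega⟩ i (by show i.1 = 2 * (i.1/2); omega)]
      exact congrArg x (Fin.ext (show 2 * (i.1 / 2) = i.1 by omega))
    · rw [Phi_right n g hg _ ⟨i.1 / 2, by omega⟩ i (by show i.1 = 2 * (i.1/2) + 1; omega)]
      exact congrArg x (Fin.ext (show 2 * (i.1 / 2) + 1 = i.1 by omega))
  · rw [Phi_tail n g hg _ ⟨i.1 - 2 * g, by omega⟩ i (by show i.1 = 2*g + (i.1 - 2*g); omega)]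
    exact congrArg x (Fin.ext (show 2 * g + (i.1 - 2 * g) = i.1 by omega))

lemma Psi_Phi (n g : ℕ) (hg : 2 * g ≤ n) (y) :
    Psi n g hg (Phi n g hg y) = y := by
  refine Prod.ext ?_ ?_
  · funext j
    exact Prod.ext (Phi_left n g hg y j _ rfl) (Phi_right n g hg y j _ rfl)
  · funext k
    exact Phi_tail n g hg y k _ rfl

def phiEquiv (n g : ℕ) (hg : 2 * g ≤ n) :
    ((Fin g → Fin 2 × Fin 2) × (Fin (n - 2 * g) → Fin 2)) ≃ (Fin n → Fin 2) where
  toFun := Phi n g hg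
  invFun := Psi n g hg
  left_inv := Psi_Phi n g hg
  right_inv := Phi_Psi n g hg


lemma pairProd (n g : ℕ) (hg : 2 * g ≤ n) (w : Fin n → Fin 2) :
    (∏ j : Fin g, (if w ⟨2 * j.1, by have := j.isLt; omega⟩ = 1 ∧ w ⟨2 * j.1 + 1, by have := j.isLt; omega⟩ = 1
          then (-2 : ℤ) else 2))
        = (-1) ^ ((Finset.univ.filter fun j : Fin g =>
            w ⟨2 * j.1, by have := j.isLt; omega⟩ = 1 ∧ w ⟨2 * j.1 + 1, by have := j.isLt; omega⟩ = 1).card) * 2 ^ g := by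
  have key : ∀ j : Fin g, (if w ⟨2 * j.1, by have := j.isLt; omega⟩ = 1 ∧ w ⟨2 * j.1 + 1, by have := j.isLt; omega⟩ = 1
        then (-2 : ℤ) else 2)
      = (if w ⟨2 * j.1, by have := j.isLt; omega⟩ = 1 ∧ w ⟨2 * j.1 + 1, by have := j.isLt; omega⟩ = 1
        then (-1 : ℤ) else 1) * 2 := by
    intro j; split <;> ring
  rw [Finset.prod_congr rfl (fun j _ => key j), Finset.prod_mul_distrib,
    Finset.prod_const, Finset.prod_ite, Finset.prod_const, Finset.prod_const,
    one_pow, mul_one]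
  congr 2
  simp [Finset.card_univ]

lemma tailProd (n g : ℕ) (hg : 2 * g ≤ n) (w : Fin n → Fin 2)
    (hall : ∀ i : Fin n, 2 * g ≤ i.1 → w i = 0) :
    (∏ k : Fin (n - 2 * g),
        (if w ⟨2 * g + k.1, by have := k.isLt; omega⟩ = 0 then (2:ℤ) else 0)) = 2 ^ (n - 2 * g) := by
  rw [Finset.prod_congr rfl (fun k _ => if_pos
    (hall ⟨2 * g + k.1, by have := k.isLt; omega⟩ (show 2 * g ≤ 2 * g + k.1 by omega)))]
  simp

lemma twoPowCombine (n g : ℕ) (hg : 2 * g ≤ n) : (2:ℤ) ^ g * 2 ^ (n - 2 * g) = 2 ^ (n - g) := by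
  rw [← pow_add]
  congr 1
  omega

/-- `Ncount n f c` is the number of 0-1 vectors `x` with `f x = c` in `ℤ/4ℤ`. -/
def Ncount (n : ℕ) (f : (Fin n → Fin 2) → ZMod 4) (c : ZMod 4) : ℕ :=
  (Finset.univ.filter fun x => f x = c).card

set_option maxHeartbeats 16000000 in
theorem stmt_2 (n g : ℕ) (hg : 2 * g ≤ n) (w : Fin n → Fin 2)
    (f : (Fin n → Fin 2) → ZMod 4)
    (hf : ∀ x, f x =
      2 * (∑ j : Fin g, ((x ⟨2 * j.1, by omega⟩ : ℕ) : ZMod 4) *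
            ((x ⟨2 * j.1 + 1, by omega⟩ : ℕ) : ZMod 4)) +
      2 * ∑ i : Fin n, ((w i : ℕ) : ZMod 4) * ((x i : ℕ) : ZMod 4)) :
    Ncount n f 1 = 0 ∧ Ncount n f 3 = 0 ∧
    ((∃ i : Fin n, 2 * g ≤ i.1 ∧ w i = 1) → Ncount n f 0 = Ncount n f 2) ∧
    ((∀ i : Fin n, 2 * g ≤ i.1 → w i = 0) →
      (Ncount n f 0 : ℤ) - (Ncount n f 2 : ℤ) =
        (-1) ^ ((Finset.univ.filter fun j : Fin g =>
            w ⟨2 * j.1, by omega⟩ = 1 ∧ w ⟨2 * j.1 + 1, by omega⟩ = 1).card) *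
          2 ^ (n - g)) := by

  obtain ⟨v, hv⟩ : ∃ v : (Fin n → Fin 2) → ZMod 2, ∀ x, v x =
      (∑ j : Fin g, ((x ⟨2 * j.1, by omega⟩ : ℕ) : ZMod 2) *
          ((x ⟨2 * j.1 + 1, by omega⟩ : ℕ) : ZMod 2)) +
      ∑ i : Fin n, ((w i : ℕ) : ZMod 2) * ((x i : ℕ) : ZMod 2) :=
    ⟨_, fun _ => rfl⟩
  have hπeq : ∀ x : Fin n → Fin 2,
      (ZMod.castHom (by norm_num : (2:ℕ) ∣ 4) (ZMod 2))
        ((∑ j : Fin g, ((x ⟨2 * j.1, by omega⟩ : ℕ) : ZMod 4) *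
            ((x ⟨2 * j.1 + 1, by omega⟩ : ℕ) : ZMod 4)) +
         ∑ i : Fin n, ((w i : ℕ) : ZMod 4) * ((x i : ℕ) : ZMod 4)) = v x := by
    intro x
    rw [hv x]
    simp only [map_add, map_sum, map_mul, map_natCast]
  have hfv : ∀ x, f x = if v x = 0 then 0 else 2 := by
    intro x
    rw [hf x, ← mul_add, key4, hπeq x]
  have h1 : Ncount n f 1 = 0 := by
    rw [Ncount, Finset.card_eq_zero, Finset.filter_eq_empty_iff]
    intro x _
    rw [hfv x]
    by_cases h : v x = 0 <;> simp [h] <;> decide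
  have h3 : Ncount n f 3 = 0 := by
    rw [Ncount, Finset.card_eq_zero, Finset.filter_eq_empty_iff]
    intro x _
    rw [hfv x]
    by_cases h : v x = 0 <;> simp [h] <;> decide
  have hN0 : Ncount n f 0 = (Finset.univ.filter fun x => v x = 0).card := by
    rw [Ncount]
    congr 1
    apply Finset.filter_congr
    intro x _
    by_cases h : v x = 0 <;>
      simp [hfv x, h, show (2:ZMod 4) ≠ 0 by decide]
  have hN2 : Ncount n f 2 = (Finset.univ.filter fun x => ¬ v x = 0).card := by
    rw [Ncount]
    congr 1
    apply Finset.filter_congr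
    intro x _
    by_cases h : v x = 0 <;>
      simp [hfv x, h, show (0:ZMod 4) ≠ 2 by decide]
  have hS : (Ncount n f 0 : ℤ) - (Ncount n f 2 : ℤ) = ∑ x : Fin n → Fin 2, chiZ (v x) := by
    rw [hN0, hN2]
    rw [← Finset.sum_filter_add_sum_filter_not Finset.univ (fun x => v x = 0)
      (fun x => chiZ (v x))]
    have e1 : ∑ x ∈ Finset.univ.filter (fun x => v x = 0), chiZ (v x)
        = ((Finset.univ.filter fun x : Fin n → Fin 2 => v x = 0).card : ℤ) := by
      rw [Finset.sum_congr rfl (fun x hx => show chiZ (v x) = 1 by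
        simp [chiZ, (Finset.mem_filter.mp hx).2]), Finset.sum_const]
      simp
    have e2 : ∑ x ∈ Finset.univ.filter (fun x => ¬ v x = 0), chiZ (v x)
        = -((Finset.univ.filter fun x : Fin n → Fin 2 => ¬ v x = 0).card : ℤ) := by
      rw [Finset.sum_congr rfl (fun x hx => show chiZ (v x) = -1 by
        simp [chiZ, (Finset.mem_filter.mp hx).2]), Finset.sum_const]
      simp
    rw [e1, e2]
    ring
  -- the big factorization
  have hSval : (∑ x : Fin n → Fin 2, chiZ (v x))
      = (∏ j : Fin g, (if w ⟨2 * j.1, by omega⟩ = 1 ∧ w ⟨2 * j.1 + 1, by omega⟩ = 1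
            then (-2 : ℤ) else 2)) *
        ∏ k : Fin (n - 2 * g),
          (if w ⟨2 * g + k.1, by have := k.isLt; omega⟩ = 0 then (2:ℤ) else 0) := by
    rw [← Fintype.sum_equiv (phiEquiv n g hg)
      (fun y => chiZ (v (Phi n g hg y))) (fun x => chiZ (v x)) (fun y => rfl)]
    have hpoint : ∀ y : (Fin g → Fin 2 × Fin 2) × (Fin (n - 2 * g) → Fin 2),
        chiZ (v (Phi n g hg y)) =
        (∏ j : Fin g, chiZ ((((y.1 j).1 : ℕ) : ZMod 2) * (((y.1 j).2 : ℕ) : ZMod 2) +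
            (((w ⟨2 * j.1, by omega⟩ : ℕ) : ZMod 2) * (((y.1 j).1 : ℕ) : ZMod 2) +
             ((w ⟨2 * j.1 + 1, by omega⟩ : ℕ) : ZMod 2) * (((y.1 j).2 : ℕ) : ZMod 2)))) *
        ∏ k : Fin (n - 2 * g),
          chiZ (((w ⟨2 * g + k.1, by have := k.isLt; omega⟩ : ℕ) : ZMod 2) *
            (((y.2 k) : ℕ) : ZMod 2)) := by
      intro y
      rw [hv (Phi n g hg y)]
      have hQ : (∑ j : Fin g, ((Phi n g hg y ⟨2 * j.1, by omega⟩ : ℕ) : ZMod 2) *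
            ((Phi n g hg y ⟨2 * j.1 + 1, by omega⟩ : ℕ) : ZMod 2))
          = ∑ j : Fin g, (((y.1 j).1 : ℕ) : ZMod 2) * (((y.1 j).2 : ℕ) : ZMod 2) := by
        refine Finset.sum_congr rfl fun j _ => ?_
        rw [Phi_left n g hg y j _ rfl, Phi_right n g hg y j _ rfl]
      have hhead : (∑ i ∈ Finset.univ.filter (fun i : Fin n => i.1 < 2 * g),
            ((w i : ℕ) : ZMod 2) * ((Phi n g hg y i : ℕ) : ZMod 2))
          = ∑ j : Fin g,
              (((w ⟨2 * j.1, by omega⟩ : ℕ) : ZMod 2) * (((y.1 j).1 : ℕ) : ZMod 2)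
              + ((w ⟨2 * j.1 + 1, by omega⟩ : ℕ) : ZMod 2) * (((y.1 j).2 : ℕ) : ZMod 2)) := by
        have step : (∑ i ∈ Finset.univ.filter (fun i : Fin n => i.1 < 2 * g),
              ((w i : ℕ) : ZMod 2) * ((Phi n g hg y i : ℕ) : ZMod 2))
            = ∑ p : Fin g × Fin 2,
                ((w ⟨2 * p.1.1 + p.2.1, by have := p.1.isLt; have := p.2.isLt; omega⟩ : ℕ) : ZMod 2) *
                ((Phi n g hg y ⟨2 * p.1.1 + p.2.1, by have := p.1.isLt; have := p.2.isLt; omega⟩ : ℕ) : ZMod 2) := by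
          refine Finset.sum_bij'
            (fun a ha => ((⟨a.1 / 2, by
                have := (Finset.mem_filter.mp ha).2; omega⟩ : Fin g),
              (⟨a.1 % 2, by omega⟩ : Fin 2)))
            (fun p _ => (⟨2 * p.1.1 + p.2.1, by
                have := p.1.isLt; have := p.2.isLt; omega⟩ : Fin n))
            (fun a ha => Finset.mem_univ _)
            (fun p hp => by
              simp only [Finset.mem_filter, Finset.mem_univ, true_and]
              have := p.1.isLt; have := p.2.isLt; omega)
            (fun a ha => by
              have := (Finset.mem_filter.mp ha).2
              exact Fin.ext (show 2 * (a.1 / 2) + a.1 % 2 = a.1 by omega))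
            (fun p hp => by
              have := p.2.isLt
              refine Prod.ext (Fin.ext ?_) (Fin.ext ?_)
              · show (2 * p.1.1 + p.2.1) / 2 = p.1.1; omega
              · show (2 * p.1.1 + p.2.1) % 2 = p.2.1; omega)
            (fun a ha => by
              have := (Finset.mem_filter.mp ha).2
              have hEq : (⟨2 * ((⟨a.1 / 2, by omega⟩ : Fin g)).1 +
                  ((⟨a.1 % 2, by omega⟩ : Fin 2)).1, by have := a.isLt; omega⟩ : Fin n) = a :=
                Fin.ext (show 2 * (a.1 / 2) + a.1 % 2 = a.1 by omega)
              exact (congrArg (fun i : Fin n =>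
                ((w i : ℕ) : ZMod 2) * ((Phi n g hg y i : ℕ) : ZMod 2)) hEq).symm)
        rw [step, Fintype.sum_prod_type]
        refine Finset.sum_congr rfl fun j _ => ?_
        rw [Fin.sum_univ_two]
        have e0 : (⟨2 * j.1 + (0 : Fin 2).1, by have := j.isLt; omega⟩ : Fin n)
            = ⟨2 * j.1, by omega⟩ := Fin.ext (show 2 * j.1 + (0:Fin 2).1 = 2 * j.1 by simp)
        have e1 : (⟨2 * j.1 + (1 : Fin 2).1, by have := j.isLt; omega⟩ : Fin n)
            = ⟨2 * j.1 + 1, by omega⟩ := Fin.ext (show 2 * j.1 + (1:Fin 2).1 = 2 * j.1 + 1 by simp)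
        rw [e0, e1, Phi_left n g hg y j _ rfl, Phi_right n g hg y j _ rfl]
      have htail : (∑ i ∈ Finset.univ.filter (fun i : Fin n => ¬ i.1 < 2 * g),
            ((w i : ℕ) : ZMod 2) * ((Phi n g hg y i : ℕ) : ZMod 2))
          = ∑ k : Fin (n - 2 * g),
              ((w ⟨2 * g + k.1, by have := k.isLt; omega⟩ : ℕ) : ZMod 2) *
              (((y.2 k) : ℕ) : ZMod 2) := by
        refine Finset.sum_bij'
          (fun a ha => (⟨a.1 - 2 * g, by
              have := (Finset.mem_filter.mp ha).2; have := a.isLt; omega⟩ : Fin (n - 2 * g)))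
          (fun k _ => (⟨2 * g + k.1, by have := k.isLt; omega⟩ : Fin n))
          (fun a ha => Finset.mem_univ _)
          (fun k hk => by
            simp only [Finset.mem_filter, Finset.mem_univ, true_and]
            omega)
          (fun a ha => by
            have := (Finset.mem_filter.mp ha).2
            exact Fin.ext (show 2 * g + (a.1 - 2 * g) = a.1 by omega))
          (fun k hk => Fin.ext (show 2 * g + k.1 - 2 * g = k.1 by omega))
          (fun a ha => by
            have h2 := (Finset.mem_filter.mp ha).2
            have hEq : a = (⟨2 * g + (a.1 - 2 * g), by have := a.isLt; omega⟩ : Fin n) :=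
              Fin.ext (show a.1 = 2 * g + (a.1 - 2 * g) by omega)
            rw [Phi_tail n g hg y ⟨a.1 - 2 * g, by have := a.isLt; omega⟩ a
              (show a.1 = 2 * g + (a.1 - 2 * g) by omega)]
            congr 1
            exact congrArg (fun i : Fin n => ((w i : ℕ) : ZMod 2)) hEq)
      rw [hQ, ← Finset.sum_filter_add_sum_filter_not Finset.univ (fun i : Fin n => i.1 < 2 * g)
        (fun i => ((w i : ℕ) : ZMod 2) * ((Phi n g hg y i : ℕ) : ZMod 2)), hhead, htail,
        ← add_assoc, ← Finset.sum_add_distrib, chiZ_add, chiZ_sum, chiZ_sum]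
    calc (∑ y : (Fin g → Fin 2 × Fin 2) × (Fin (n - 2 * g) → Fin 2), chiZ (v (Phi n g hg y)))
        = ∑ y : (Fin g → Fin 2 × Fin 2) × (Fin (n - 2 * g) → Fin 2),
          (∏ j : Fin g, chiZ ((((y.1 j).1 : ℕ) : ZMod 2) * (((y.1 j).2 : ℕ) : ZMod 2) +
              (((w ⟨2 * j.1, by omega⟩ : ℕ) : ZMod 2) * (((y.1 j).1 : ℕ) : ZMod 2) +
               ((w ⟨2 * j.1 + 1, by omega⟩ : ℕ) : ZMod 2) * (((y.1 j).2 : ℕ) : ZMod 2)))) *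
          ∏ k : Fin (n - 2 * g),
            chiZ (((w ⟨2 * g + k.1, by have := k.isLt; omega⟩ : ℕ) : ZMod 2) *
              (((y.2 k) : ℕ) : ZMod 2)) := Finset.sum_congr rfl fun y _ => hpoint y
      _ = (∑ p : Fin g → Fin 2 × Fin 2,
            ∏ j : Fin g, chiZ ((((p j).1 : ℕ) : ZMod 2) * (((p j).2 : ℕ) : ZMod 2) +
              (((w ⟨2 * j.1, by omega⟩ : ℕ) : ZMod 2) * (((p j).1 : ℕ) : ZMod 2) +
               ((w ⟨2 * j.1 + 1, by omega⟩ : ℕ) : ZMod 2) * (((p j).2 : ℕ) : ZMod 2)))) *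
          (∑ q : Fin (n - 2 * g) → Fin 2,
            ∏ k : Fin (n - 2 * g),
              chiZ (((w ⟨2 * g + k.1, by have := k.isLt; omega⟩ : ℕ) : ZMod 2) *
                ((q k : ℕ) : ZMod 2))) := by
          rw [Finset.sum_mul_sum]
          rw [Fintype.sum_prod_type]
      _ = (∏ j : Fin g, ∑ c : Fin 2 × Fin 2,
            chiZ (((c.1 : ℕ) : ZMod 2) * ((c.2 : ℕ) : ZMod 2) +
              (((w ⟨2 * j.1, by omega⟩ : ℕ) : ZMod 2) * ((c.1 : ℕ) : ZMod 2) +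
               ((w ⟨2 * j.1 + 1, by omega⟩ : ℕ) : ZMod 2) * ((c.2 : ℕ) : ZMod 2)))) *
          ∏ k : Fin (n - 2 * g), ∑ a : Fin 2,
            chiZ (((w ⟨2 * g + k.1, by have := k.isLt; omega⟩ : ℕ) : ZMod 2) *
              ((a : ℕ) : ZMod 2)) := by
          rw [Finset.prod_univ_sum, Finset.prod_univ_sum, Fintype.piFinset_univ,
            Fintype.piFinset_univ]
      _ = _ := by
          congr 1
          · exact Finset.prod_congr rfl fun j _ =>
              pair_sum (w ⟨2 * j.1, by omega⟩) (w ⟨2 * j.1 + 1, by omega⟩)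
          · exact Finset.prod_congr rfl fun k _ =>
              single_sum (w ⟨2 * g + k.1, by have := k.isLt; omega⟩)
  refine ⟨h1, h3, ?_, ?_⟩
  · rintro ⟨i0, hi0, hwi0⟩
    have hz : (Ncount n f 0 : ℤ) - (Ncount n f 2 : ℤ) = 0 := by
      rw [hS, hSval]
      have hidx : (⟨2 * g + ((⟨i0.1 - 2 * g, by have := i0.isLt; omega⟩ :
          Fin (n - 2 * g))).1, by have := i0.isLt; omega⟩ : Fin n) = i0 :=
        Fin.ext (show 2 * g + (i0.1 - 2 * g) = i0.1 by omega)
      have hk : (if w ⟨2 * g + ((⟨i0.1 - 2 * g, by have := i0.isLt; omega⟩ :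
          Fin (n - 2 * g))).1, by have := i0.isLt; omega⟩ = 0 then (2:ℤ) else 0) = 0 := by
        rw [hidx, hwi0]
        norm_num
      rw [Finset.prod_eq_zero (Finset.mem_univ (⟨i0.1 - 2 * g, by have := i0.isLt; omega⟩ :
        Fin (n - 2 * g))) hk, mul_zero]
    have := sub_eq_zero.mp hz
    exact_mod_cast this
  · intro hall
    rw [hS, hSval, tailProd n g hg w hall, pairProd n g hg w, mul_assoc,
      twoPowCombine n g hg]
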